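/- One step of the Strang splitting scheme preserves the discrete finite mass. Precisely, let τ > 0 and let (ψ_n)_{x_n∈X_N} be complex grid values. Define: (i) the half potential step φ_n = e^{(iτ/4)(1−|ψ_n|²)} ψ_n; (ii) the Fourier coefficients φ̂_k = h₁h₂h₃ ∑_{x_n∈X_N} φ_n conj(𝓔_k(x_n)); (iii) the kinetic step in Fourier space χ̂_k = e^{(iτ/2)(Λ_{k,1}²+Λ_{k,2}²+Λ_{k,3}²)} φ̂_k with Λ_{k,d} = 2πi(k_d−1−N_d/2)/(b_d−a_d), and its grid evaluation χ_n = ∑_{k∈I_N} χ̂_k 𝓔_k(x_n); (iv) the final half potential step ψ'_n = e^{(iτ/4)(1−|χ_n|²)} χ_n. Then h₁h₂h₃ ∑_{x_n∈X_N} |ψ'_n|² = h₁h₂h₃ ∑_{x_n∈X_N} |ψ_n|². -/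

import Mathlib

open scoped Real
open Complex MeasureTheory Finset

/-- The 3d Fourier basis function `𝓔ₖ(x) = ∏_d e^{2πi(k_d−1−N_d/2)(x_d−a_d)/(b_d−a_d)}/√(b_d−a_d)`. -/
noncomputable def basisE (N : Fin 3 → ℕ) (a b : Fin 3 → ℝ) (k : Fin 3 → ℕ)
    (x : Fin 3 → ℝ) : ℂ :=
  ∏ d : Fin 3,
    Complex.exp (2 * (Real.pi : ℂ) * Complex.I * ((k d : ℂ) - 1 - (N d : ℂ) / 2) *
        ((x d - a d : ℝ) : ℂ) / ((b d - a d : ℝ) : ℂ)) / ((Real.sqrt (b d - a d) : ℝ) : ℂ)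

/-- The point `x_n = (a_d + (n_d − 1) h_d)_d` of the regular grid `X_N`,
where `h_d = (b_d − a_d)/N_d`. -/
noncomputable def gridPt (N : Fin 3 → ℕ) (a b : Fin 3 → ℝ) (n : Fin 3 → ℕ) : Fin 3 → ℝ :=
  fun d => a d + ((n d : ℝ) - 1) * ((b d - a d) / (N d : ℝ))

/-- The symbol `Λ_{k,d} = 2πi(k_d − 1 − N_d/2)/(b_d − a_d)` of `∂_{x_d}` on `𝓔ₖ`. -/
noncomputable def lam (N : Fin 3 → ℕ) (a b : Fin 3 → ℝ) (k : Fin 3 → ℕ) (d : Fin 3) : ℂ :=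
  2 * (Real.pi : ℂ) * Complex.I * ((k d : ℂ) - 1 - (N d : ℂ) / 2) / ((b d - a d : ℝ) : ℂ)

-- core geometric sum lemma
lemma sum_exp_core (M : ℕ) (hM : 0 < M) (c : ℤ) (hc : c.natAbs < M) :
    ∑ m ∈ Finset.range M, Complex.exp (2 * (Real.pi:ℂ) * Complex.I * c / M) ^ m =
      if c = 0 then (M : ℂ) else 0 := by
  by_cases h : c = 0
  · simp [h]
  · rw [if_neg h]
    set z : ℂ := Complex.exp (2 * (Real.pi:ℂ) * Complex.I * c / M) with hz
    have hzM : z ^ M = 1 := by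
      rw [hz, ← Complex.exp_nat_mul]
      have hMne : (M:ℂ) ≠ 0 := Nat.cast_ne_zero.mpr hM.ne'
      have : (M:ℂ) * (2 * (Real.pi:ℂ) * Complex.I * c / M) = c * (2 * Real.pi * Complex.I) := by
        field_simp
      rw [this, Complex.exp_int_mul_two_pi_mul_I]
    have hz1 : z ≠ 1 := by
      intro he
      rw [hz, Complex.exp_eq_one_iff] at he
      obtain ⟨n, hn⟩ := he
      have hMne : (M:ℂ) ≠ 0 := Nat.cast_ne_zero.mpr hM.ne'
      have hpi : (2 * (Real.pi:ℂ) * Complex.I) ≠ 0 := by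
        simp [Real.pi_ne_zero, Complex.I_ne_zero]
      have : (c:ℂ) = n * M := by
        field_simp at hn
        have h2 : (c:ℂ) * (2 * (Real.pi:ℂ) * Complex.I) = (n * M) * (2 * (Real.pi:ℂ) * Complex.I) := by
          linear_combination (2 * (Real.pi:ℂ) * Complex.I) * hn
        exact mul_right_cancel₀ hpi h2
      have hcz : c = n * M := by exact_mod_cast this
      rcases eq_or_ne n 0 with h0 | h0
      · exact h (by simp [hcz, h0])
      · have : (M:ℤ) ≤ |c| := by
          rw [hcz, abs_mul]
          calc (M:ℤ) = 1 * M := by ring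
          _ ≤ |n| * |(M:ℤ)| := by
            apply mul_le_mul
            · exact Int.one_le_abs h0
            · simp
            · positivity
            · positivity
        have : (M:ℤ) ≤ c.natAbs := by rwa [Int.abs_eq_natAbs] at this
        omega
    rw [geom_sum_eq hz1, hzM]
    simp

lemma sum_exp_Icc (M : ℕ) (hM : 0 < M) (c : ℤ) (hc : c.natAbs < M) :
    ∑ n ∈ Finset.Icc 1 M, Complex.exp (2 * (Real.pi:ℂ) * Complex.I * c * ((n:ℂ) - 1) / M) =
      if c = 0 then (M : ℂ) else 0 := by
  rw [← sum_exp_core M hM c hc]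
  refine Finset.sum_nbij' (fun n => n - 1) (fun m => m + 1) ?_ ?_ ?_ ?_ ?_
  · intro n hn; simp at hn ⊢; omega
  · intro m hm; simp at hm ⊢; omega
  · intro n hn; simp at hn ⊢; omega
  · intro m hm; rfl
  · intro n hn
    simp only [Finset.mem_Icc] at hn
    rw [← Complex.exp_nat_mul]
    congr 1
    have : ((n - 1 : ℕ) : ℂ) = (n : ℂ) - 1 := by
      push_cast [Nat.cast_sub hn.1]; ring
    rw [this]
    ring

noncomputable def F (M k n : ℕ) : ℂ :=
  Complex.exp (2 * (Real.pi:ℂ) * Complex.I * ((k:ℂ) - 1 - (M:ℂ)/2) * ((n:ℂ) - 1) / M)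

lemma conj_F (M k n : ℕ) : (starRingEnd ℂ) (F M k n) =
    Complex.exp (-(2 * (Real.pi:ℂ) * Complex.I * ((k:ℂ) - 1 - (M:ℂ)/2) * ((n:ℂ) - 1) / M)) := by
  rw [F, ← Complex.exp_conj]
  congr 1
  simp [map_div₀, map_ofNat]
  ring

lemma orth_n (M : ℕ) (hM : 0 < M) (k j : ℕ) (hk : k ∈ Finset.Icc 1 M) (hj : j ∈ Finset.Icc 1 M) :
    ∑ n ∈ Finset.Icc 1 M, (starRingEnd ℂ) (F M k n) * F M j n =
      if k = j then (M : ℂ) else 0 := by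
  simp only [Finset.mem_Icc] at hk hj
  have key : ∀ n : ℕ, (starRingEnd ℂ) (F M k n) * F M j n =
      Complex.exp (2 * (Real.pi:ℂ) * Complex.I * (((j:ℤ) - (k:ℤ) : ℤ):ℂ) * ((n:ℂ) - 1) / M) := by
    intro n
    rw [conj_F, F, ← Complex.exp_add]
    congr 1
    push_cast
    ring
  simp only [key]
  rw [sum_exp_Icc M hM ((j:ℤ) - (k:ℤ)) (by omega)]
  by_cases h : k = j <;> simp [h, sub_eq_zero] <;> omega

lemma orth_k (M : ℕ) (hM : 0 < M) (n m : ℕ) (hn : n ∈ Finset.Icc 1 M) (hm : m ∈ Finset.Icc 1 M) :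
    ∑ k ∈ Finset.Icc 1 M, (starRingEnd ℂ) (F M k n) * F M k m =
      if n = m then (M : ℂ) else 0 := by
  simp only [Finset.mem_Icc] at hn hm
  set c : ℤ := (m:ℤ) - (n:ℤ) with hc
  have key : ∀ k : ℕ, (starRingEnd ℂ) (F M k n) * F M k m =
      Complex.exp (-(Real.pi:ℂ) * Complex.I * c) *
        Complex.exp (2 * (Real.pi:ℂ) * Complex.I * (c:ℂ) * ((k:ℂ) - 1) / M) := by
    intro k
    rw [conj_F, F, ← Complex.exp_add, ← Complex.exp_add]
    congr 1
    have hMne : (M:ℂ) ≠ 0 := Nat.cast_ne_zero.mpr hM.ne'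
    rw [hc]
    push_cast
    field_simp
    ring
  simp only [key, ← Finset.mul_sum]
  rw [sum_exp_Icc M hM c (by omega)]
  by_cases h : n = m
  · have : c = 0 := by omega
    simp [h, this]
  · have : ¬ c = 0 := by omega
    simp [h, this]

section main
variable (N : Fin 3 → ℕ) (a b : Fin 3 → ℝ)

lemma basisE_grid (hN : ∀ d, 0 < N d) (hab : ∀ d, a d < b d) (k n : Fin 3 → ℕ) :
    basisE N a b k (gridPt N a b n) =
      ∏ d : Fin 3, F (N d) (k d) (n d) / ((Real.sqrt (b d - a d) : ℝ) : ℂ) := by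
  unfold basisE gridPt F
  apply Finset.prod_congr rfl
  intro d _
  congr 2
  have hs : ((b d:ℂ) - (a d:ℂ)) ≠ 0 := by
    have h0 : (b d - a d : ℝ) ≠ 0 := by have := hab d; intro h; linarith [sub_eq_zero.mp h]
    intro h; apply h0
    have : ((b d - a d : ℝ):ℂ) = 0 := by push_cast; exact h
    exact_mod_cast this
  have hM : ((N d : ℕ):ℂ) ≠ 0 := Nat.cast_ne_zero.mpr (hN d).ne'
  have key : ∀ (A s M x : ℂ), s ≠ 0 → M ≠ 0 → A * (x*(s/M))/s = A*x/M := by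
    intro A s M x h1 h2; field_simp
  push_cast
  rw [add_sub_cancel_left]
  exact key _ _ _ _ hs hM

variable (hN : ∀ d, 0 < N d) (hab : ∀ d, a d < b d)

noncomputable def C3 : ℂ := ∏ d : Fin 3, ((N d : ℂ) / ((b d - a d : ℝ) : ℂ))

include hN hab in
lemma prodF (k j n : Fin 3 → ℕ) :
    (starRingEnd ℂ) (basisE N a b k (gridPt N a b n)) * basisE N a b j (gridPt N a b n) =
      ∏ d : Fin 3, ((starRingEnd ℂ) (F (N d) (k d) (n d)) * F (N d) (j d) (n d)
        / ((b d - a d : ℝ) : ℂ)) := by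
  rw [basisE_grid N a b hN hab, basisE_grid N a b hN hab, map_prod, ← Finset.prod_mul_distrib]
  apply Finset.prod_congr rfl
  intro d _
  rw [map_div₀, Complex.conj_ofReal]
  have h1 : ((Real.sqrt (b d - a d) : ℝ):ℂ) * ((Real.sqrt (b d - a d) : ℝ):ℂ)
      = ((b d - a d : ℝ):ℂ) := by
    rw [← Complex.ofReal_mul, Real.mul_self_sqrt (le_of_lt (sub_pos.mpr (hab d)))]
  rw [div_mul_div_comm, h1]

include hN hab in
lemma orth3_n (k j : Fin 3 → ℕ)
    (hk : k ∈ Fintype.piFinset (fun d => Finset.Icc 1 (N d)))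
    (hj : j ∈ Fintype.piFinset (fun d => Finset.Icc 1 (N d))) :
    ∑ n ∈ Fintype.piFinset (fun d => Finset.Icc 1 (N d)),
      (starRingEnd ℂ) (basisE N a b k (gridPt N a b n)) * basisE N a b j (gridPt N a b n) =
    if k = j then C3 N a b else 0 := by
  simp only [prodF N a b hN hab]
  rw [← Finset.prod_univ_sum (fun d => Finset.Icc 1 (N d))
    (fun d m => (starRingEnd ℂ) (F (N d) (k d) m) * F (N d) (j d) m / ((b d - a d : ℝ):ℂ))]
  have step : ∀ d : Fin 3, (∑ m ∈ Finset.Icc 1 (N d),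
      (starRingEnd ℂ) (F (N d) (k d) m) * F (N d) (j d) m / ((b d - a d : ℝ):ℂ)) =
      if k d = j d then (N d : ℂ) / ((b d - a d : ℝ):ℂ) else 0 := by
    intro d
    rw [← Finset.sum_div, orth_n (N d) (hN d) (k d) (j d)
      (Fintype.mem_piFinset.mp hk d) (Fintype.mem_piFinset.mp hj d)]
    by_cases h : k d = j d <;> simp [h]
  simp only [step]
  by_cases h : k = j
  · simp [h, C3]
  · have : ∃ d, k d ≠ j d := by
      by_contra hc; push_neg at hc; exact h (funext hc)
    obtain ⟨d, hd⟩ := this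
    rw [if_neg h]
    exact Finset.prod_eq_zero (Finset.mem_univ d) (by rw [if_neg hd])

include hN hab in
lemma orth3_k (n m : Fin 3 → ℕ)
    (hn : n ∈ Fintype.piFinset (fun d => Finset.Icc 1 (N d)))
    (hm : m ∈ Fintype.piFinset (fun d => Finset.Icc 1 (N d))) :
    ∑ k ∈ Fintype.piFinset (fun d => Finset.Icc 1 (N d)),
      (starRingEnd ℂ) (basisE N a b k (gridPt N a b n)) * basisE N a b k (gridPt N a b m) =
    if n = m then C3 N a b else 0 := by
  have key : ∀ k : Fin 3 → ℕ,
      (starRingEnd ℂ) (basisE N a b k (gridPt N a b n)) * basisE N a b k (gridPt N a b m) =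
      ∏ d : Fin 3, ((starRingEnd ℂ) (F (N d) (k d) (n d)) * F (N d) (k d) (m d)
        / ((b d - a d : ℝ):ℂ)) := by
    intro k
    have h1 := prodF N a b hN hab k k n
    -- need mixed version: conj(E k x_n) * E k x_m
    rw [basisE_grid N a b hN hab, basisE_grid N a b hN hab, map_prod,
      ← Finset.prod_mul_distrib]
    apply Finset.prod_congr rfl
    intro d _
    rw [map_div₀, Complex.conj_ofReal, div_mul_div_comm,
      ← Complex.ofReal_mul, Real.mul_self_sqrt (le_of_lt (sub_pos.mpr (hab d)))]
  simp only [key]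
  rw [← Finset.prod_univ_sum (fun d => Finset.Icc 1 (N d))
    (fun d l => (starRingEnd ℂ) (F (N d) l (n d)) * F (N d) l (m d) / ((b d - a d : ℝ):ℂ))]
  have step : ∀ d : Fin 3, (∑ l ∈ Finset.Icc 1 (N d),
      (starRingEnd ℂ) (F (N d) l (n d)) * F (N d) l (m d) / ((b d - a d : ℝ):ℂ)) =
      if n d = m d then (N d : ℂ) / ((b d - a d : ℝ):ℂ) else 0 := by
    intro d
    rw [← Finset.sum_div, orth_k (N d) (hN d) (n d) (m d)
      (Fintype.mem_piFinset.mp hn d) (Fintype.mem_piFinset.mp hm d)]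
    by_cases h : n d = m d <;> simp [h]
  simp only [step]
  by_cases h : n = m
  · simp [h, C3]
  · have : ∃ d, n d ≠ m d := by
      by_contra hc; push_neg at hc; exact h (funext hc)
    obtain ⟨d, hd⟩ := this
    rw [if_neg h]
    exact Finset.prod_eq_zero (Finset.mem_univ d) (by rw [if_neg hd])
end main

-- norm of exp(I * real) is 1
lemma norm_exp_I_mul (t : ℝ) : ‖Complex.exp (Complex.I * (t:ℂ))‖ = 1 := by
  rw [Complex.norm_exp]
  simp [Complex.mul_re]

lemma exp_I_mul_conj (t : ℝ) :
    Complex.exp (Complex.I * (t:ℂ)) * (starRingEnd ℂ) (Complex.exp (Complex.I * (t:ℂ))) = 1 := by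
  rw [← Complex.exp_conj, ← Complex.exp_add]
  simp

lemma normsq_c (z : ℂ) : ((‖z‖^2 : ℝ):ℂ) = z * (starRingEnd ℂ) z := by
  rw [Complex.mul_conj, Complex.sq_norm]

lemma lam_sq_real (N : Fin 3 → ℕ) (a b : Fin 3 → ℝ) (k : Fin 3 → ℕ) (d : Fin 3) :
    lam N a b k d ^ 2 =
      ((-(2 * Real.pi * (((k d : ℝ)) - 1 - (N d : ℝ)/2) / (b d - a d))^2 : ℝ) : ℂ) := by
  have lam_eq : lam N a b k d =
      Complex.I * ((2 * Real.pi * (((k d : ℝ)) - 1 - (N d : ℝ)/2) / (b d - a d) : ℝ):ℂ) := by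
    unfold lam; push_cast; ring
  rw [lam_eq]
  push_cast
  rw [mul_pow, Complex.I_sq]
  ring


/-- one step of the Strang splitting scheme for the Gross–Pitaevskii equation
preserves the discrete finite mass `h₁h₂h₃ ∑_{x_n∈X_N} |ψ_n|²`. The step consists of a half
potential step `φ_n = e^{(iτ/4)(1−|ψ_n|²)} ψ_n`, a full kinetic step carried out in Fourier
space, `χ̂ₖ = e^{(iτ/2)(Λ_{k,1}²+Λ_{k,2}²+Λ_{k,3}²)} φ̂ₖ` with
`φ̂ₖ = h₁h₂h₃ ∑_n φ_n conj(𝓔ₖ(x_n))` and `χ_n = ∑_{k∈I_N} χ̂ₖ 𝓔ₖ(x_n)`, followed by a final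
half potential step `ψ'_n = e^{(iτ/4)(1−|χ_n|²)} χ_n`. -/
theorem strang_splitting_mass_conservation (N : Fin 3 → ℕ) (hN : ∀ d, 0 < N d ∧ Even (N d))
    (a b : Fin 3 → ℝ) (hab : ∀ d, a d < b d)
    (τ : ℝ) (hτ : 0 < τ)
    (ψ φ χ ψ' : (Fin 3 → ℕ) → ℂ) (φhat χhat : (Fin 3 → ℕ) → ℂ)
    (hφ : ∀ n, φ n = Complex.exp (Complex.I * (τ : ℂ) / 4 * (1 - ((‖ψ n‖ : ℝ) : ℂ) ^ 2)) * ψ n)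
    (hφhat : ∀ k, φhat k = ((∏ d : Fin 3, (b d - a d) / (N d : ℝ) : ℝ) : ℂ) *
      ∑ n ∈ Fintype.piFinset (fun d => Finset.Icc 1 (N d)),
        φ n * (starRingEnd ℂ) (basisE N a b k (gridPt N a b n)))
    (hχhat : ∀ k, χhat k =
      Complex.exp (Complex.I * (τ : ℂ) / 2 * ∑ d : Fin 3, lam N a b k d ^ 2) * φhat k)
    (hχ : ∀ n, χ n = ∑ k ∈ Fintype.piFinset (fun d => Finset.Icc 1 (N d)),
      χhat k * basisE N a b k (gridPt N a b n))
    (hψ' : ∀ n, ψ' n =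
      Complex.exp (Complex.I * (τ : ℂ) / 4 * (1 - ((‖χ n‖ : ℝ) : ℂ) ^ 2)) * χ n) :
    ((∏ d : Fin 3, (b d - a d) / (N d : ℝ)) *
        ∑ n ∈ Fintype.piFinset (fun d => Finset.Icc 1 (N d)), ‖ψ' n‖ ^ 2) =
      (∏ d : Fin 3, (b d - a d) / (N d : ℝ)) *
        ∑ n ∈ Fintype.piFinset (fun d => Finset.Icc 1 (N d)), ‖ψ n‖ ^ 2 := by
  have hN1 : ∀ d, 0 < N d := fun d => (hN d).1
  set S := Fintype.piFinset (fun d => Finset.Icc 1 (N d)) with hSdef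
  set C : ℂ := C3 N a b with hCdef
  set h : ℝ := ∏ d : Fin 3, (b d - a d) / (N d : ℝ) with hhdef
  -- h * C = 1
  have hsne : ∀ d, (b d - a d) ≠ 0 := fun d => by have := hab d; intro hc; linarith [sub_eq_zero.mp hc]
  have hhC : (h : ℂ) * C = 1 := by
    rw [hCdef, hhdef, C3]
    push_cast
    rw [← Finset.prod_mul_distrib]
    apply Finset.prod_eq_one
    intro d _
    have h1 : ((b d : ℂ) - a d) ≠ 0 := by
      intro hc
      apply hsne d
      have : ((b d - a d : ℝ):ℂ) = 0 := by push_cast; exact hc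
      exact_mod_cast this
    have h2 : ((N d : ℕ):ℂ) ≠ 0 := Nat.cast_ne_zero.mpr (hN1 d).ne'
    field_simp
  -- potential steps preserve pointwise norm
  have hre1 : ∀ (r : ℝ), Complex.I * (τ : ℂ) / 4 * (1 - ((r:ℝ):ℂ)^2) =
      Complex.I * ((τ/4*(1 - r^2) : ℝ):ℂ) := by intro r; push_cast; ring
  have hnψ' : ∀ n, (‖ψ' n‖:ℝ)^2 = ‖χ n‖^2 := by
    intro n
    rw [hψ' n, norm_mul, hre1, norm_exp_I_mul, one_mul]
  have hnφ : ∀ n, (‖φ n‖:ℝ)^2 = ‖ψ n‖^2 := by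
    intro n
    rw [hφ n, norm_mul, hre1, norm_exp_I_mul, one_mul]
  -- multiplier is unimodular
  have hmul : ∀ k, χhat k * (starRingEnd ℂ) (χhat k) = φhat k * (starRingEnd ℂ) (φhat k) := by
    intro k
    rw [hχhat k, map_mul]
    have hz : Complex.I * (τ : ℂ) / 2 * ∑ d : Fin 3, lam N a b k d ^ 2 =
        Complex.I * ((τ/2 * ∑ d : Fin 3,
          (-(2 * Real.pi * (((k d : ℝ)) - 1 - (N d : ℝ)/2) / (b d - a d))^2) : ℝ):ℂ) := by
      simp only [lam_sq_real]
      rw [show (∑ d : Fin 3, ((-(2 * Real.pi * (((k d : ℝ)) - 1 - (N d : ℝ)/2) / (b d - a d))^2 : ℝ):ℂ)) =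
        (((∑ d : Fin 3, -(2 * Real.pi * (((k d : ℝ)) - 1 - (N d : ℝ)/2) / (b d - a d))^2) : ℝ):ℂ) from by
          push_cast; rfl]
      push_cast
      ring
    rw [hz]
    have := exp_I_mul_conj (τ/2 * ∑ d : Fin 3,
      (-(2 * Real.pi * (((k d : ℝ)) - 1 - (N d : ℝ)/2) / (b d - a d))^2))
    calc Complex.exp _ * φhat k * ((starRingEnd ℂ) (Complex.exp _) * (starRingEnd ℂ) (φhat k))
        = (Complex.exp _ * (starRingEnd ℂ) (Complex.exp _)) * (φhat k * (starRingEnd ℂ) (φhat k)) := by ring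
      _ = φhat k * (starRingEnd ℂ) (φhat k) := by rw [this, one_mul]
  -- Parseval step A
  have stepA : ∑ n ∈ S, χ n * (starRingEnd ℂ) (χ n) =
      C * ∑ k ∈ S, χhat k * (starRingEnd ℂ) (χhat k) := by
    have expand : ∀ n, χ n * (starRingEnd ℂ) (χ n) =
        ∑ k ∈ S, ∑ j ∈ S, (χhat k * (starRingEnd ℂ) (χhat j)) *
          ((starRingEnd ℂ) (basisE N a b j (gridPt N a b n)) * basisE N a b k (gridPt N a b n)) := by
      intro n
      rw [hχ n, map_sum, Finset.sum_mul_sum]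
      apply Finset.sum_congr rfl; intro k _
      apply Finset.sum_congr rfl; intro j _
      rw [map_mul]
      ring
    simp only [expand]
    rw [Finset.sum_comm]
    have inner : ∀ k ∈ S, (∑ n ∈ S, ∑ j ∈ S, (χhat k * (starRingEnd ℂ) (χhat j)) *
        ((starRingEnd ℂ) (basisE N a b j (gridPt N a b n)) * basisE N a b k (gridPt N a b n))) =
        C * (χhat k * (starRingEnd ℂ) (χhat k)) := by
      intro k hk
      rw [Finset.sum_comm]
      have swap : ∀ j ∈ S, (∑ n ∈ S, (χhat k * (starRingEnd ℂ) (χhat j)) *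
          ((starRingEnd ℂ) (basisE N a b j (gridPt N a b n)) * basisE N a b k (gridPt N a b n))) =
          (χhat k * (starRingEnd ℂ) (χhat j)) * (if j = k then C else 0) := by
        intro j hj
        rw [← Finset.mul_sum, orth3_n N a b hN1 hab j k hj hk]
      rw [Finset.sum_congr rfl swap, Finset.sum_eq_single k]
      · simp [mul_comm]
      · intro j _ hjk; simp [hjk]
      · intro hk'; exact absurd hk hk'
    rw [Finset.sum_congr rfl inner, ← Finset.mul_sum]
  -- Parseval step B
  have stepB : ∑ k ∈ S, φhat k * (starRingEnd ℂ) (φhat k) =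
      (h:ℂ)^2 * C * ∑ n ∈ S, φ n * (starRingEnd ℂ) (φ n) := by
    have expand : ∀ k, φhat k * (starRingEnd ℂ) (φhat k) =
        (h:ℂ)^2 * ∑ n ∈ S, ∑ m ∈ S, (φ n * (starRingEnd ℂ) (φ m)) *
          ((starRingEnd ℂ) (basisE N a b k (gridPt N a b n)) * basisE N a b k (gridPt N a b m)) := by
      intro k
      rw [hφhat k, map_mul, map_sum, Complex.conj_ofReal]
      rw [show ((h:ℂ) * ∑ n ∈ S, φ n * (starRingEnd ℂ) (basisE N a b k (gridPt N a b n))) *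
          ((h:ℂ) * ∑ m ∈ S, (starRingEnd ℂ) (φ m * (starRingEnd ℂ) (basisE N a b k (gridPt N a b m)))) =
          (h:ℂ)^2 * ((∑ n ∈ S, φ n * (starRingEnd ℂ) (basisE N a b k (gridPt N a b n))) *
          (∑ m ∈ S, (starRingEnd ℂ) (φ m * (starRingEnd ℂ) (basisE N a b k (gridPt N a b m))))) from by ring]
      congr 1
      rw [Finset.sum_mul_sum]
      apply Finset.sum_congr rfl; intro n _
      apply Finset.sum_congr rfl; intro m _
      rw [map_mul, RingHomInvPair.comp_apply_eq]
      ring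
    simp only [expand]
    rw [← Finset.mul_sum]
    have inner : ∀ n ∈ S, (∑ k ∈ S, ∑ m ∈ S, (φ n * (starRingEnd ℂ) (φ m)) *
        ((starRingEnd ℂ) (basisE N a b k (gridPt N a b n)) * basisE N a b k (gridPt N a b m))) =
        C * (φ n * (starRingEnd ℂ) (φ n)) := by
      intro n hn
      rw [Finset.sum_comm]
      have swap : ∀ m ∈ S, (∑ k ∈ S, (φ n * (starRingEnd ℂ) (φ m)) *
          ((starRingEnd ℂ) (basisE N a b k (gridPt N a b n)) * basisE N a b k (gridPt N a b m))) =
          (φ n * (starRingEnd ℂ) (φ m)) * (if n = m then C else 0) := by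
        intro m hm
        rw [← Finset.mul_sum, orth3_k N a b hN1 hab n m hn hm]
      rw [Finset.sum_congr rfl swap, Finset.sum_eq_single n]
      · simp [mul_comm]
      · intro m _ hmn; simp [Ne.symm hmn]
      · intro hn'; exact absurd hn hn'
    rw [Finset.sum_comm]
    rw [Finset.sum_congr rfl inner, ← Finset.mul_sum]
    ring
  -- combine: complex mass identity
  have hmass : ∑ n ∈ S, χ n * (starRingEnd ℂ) (χ n) = ∑ n ∈ S, φ n * (starRingEnd ℂ) (φ n) := by
    rw [stepA, Finset.sum_congr rfl (fun k _ => hmul k), stepB]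
    rw [show C * ((h:ℂ)^2 * C * ∑ n ∈ S, φ n * (starRingEnd ℂ) (φ n)) =
      ((h:ℂ) * C) * ((h:ℂ) * C) * ∑ n ∈ S, φ n * (starRingEnd ℂ) (φ n) from by ring, hhC]
    ring
  -- back to real norms
  have hreal : ∑ n ∈ S, (‖χ n‖:ℝ)^2 = ∑ n ∈ S, ‖φ n‖^2 := by
    have : ((∑ n ∈ S, (‖χ n‖:ℝ)^2 : ℝ):ℂ) = ((∑ n ∈ S, (‖φ n‖:ℝ)^2 : ℝ):ℂ) := by
      rw [Complex.ofReal_sum, Complex.ofReal_sum]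
      simp only [normsq_c]
      exact hmass
    exact_mod_cast this
  congr 1
  calc ∑ n ∈ S, ‖ψ' n‖^2 = ∑ n ∈ S, ‖χ n‖^2 := Finset.sum_congr rfl (fun n _ => hnψ' n)
    _ = ∑ n ∈ S, ‖φ n‖^2 := hreal
    _ = ∑ n ∈ S, ‖ψ n‖^2 := Finset.sum_congr rfl (fun n _ => hnφ n)
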